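/- Define E⁺ = E × {0} ⊂ ℝⁿ⁺ᴰ and for (x₀,0) ∈ E⁺, M > 0, let Γ((x₀,0), M) = {P ∈ P⁺ : P(x₀,0) = 0, ∇_ξ P(x₀,0) ∈ K(x₀), and |∂_x^α ∂_ξ^β P(x₀,0)| ≤ M for all |α|+|β| ≤ m}. Then Γ⃗ = (Γ((x₀,0),M)) is a (C,1)-convex shape field on E⁺ (for the parameters m+1, n+D in place of m, n), where C depends only on m, n, D. In particular: if P₁, P₂ ∈ Γ((x₀,0),M), Q₁, Q₂ ∈ P⁺ with |∂_x^α∂_ξ^β Q_i(x₀,0)| ≤ δ^{−|α|−|β|} for |α|+|β| ≤ m and Q₁⊙Q₁ + Q₂⊙Q₂ = 1 (multiplication of m-jets at (x₀,0)), and |∂_x^α∂_ξ^β(P₁−P₂)(x₀,0)| ≤ Mδ^{(m+1)−|α|−|β|} for |α|+|β| ≤ m with 0 < δ ≤ 1, then P := Q₁⊙Q₁⊙P₁ + Q₂⊙Q₂⊙P₂ satisfies P(x₀,0) = 0, ∇_ξ P(x₀,0) = Q₁(x₀,0)²∇_ξP₁(x₀,0) + Q₂(x₀,0)²∇_ξP₂(x₀,0)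 ∈ K(x₀), and P ∈ Γ((x₀,0), CM). -/

import Mathlib

noncomputable section

/-- Iterated partial derivative `∂^β` of a multivariate polynomial. -/
def pdiff {N : ℕ} (β : Fin N → ℕ) (P : MvPolynomial (Fin N) ℝ) :
    MvPolynomial (Fin N) ℝ :=
  (List.finRange N).foldr (fun i Q => (fun R => MvPolynomial.pderiv i R)^[β i] Q) P

/-- `∂^β P (x)`. -/
def pdEval {N : ℕ} (β : Fin N → ℕ) (P : MvPolynomial (Fin N) ℝ) (x : Fin N → ℝ) : ℝ :=
  MvPolynomial.eval x (pdiff β P)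

/-- The multiindices of order `≤ m' - 1` as a `Finset`. -/
def multiIdx (m' N : ℕ) : Finset (Fin N → ℕ) :=
  (Fintype.piFinset fun _ : Fin N => Finset.range m').filter fun α => (∑ i, α i) ≤ m' - 1

/-- The `(m'-1)`-st degree Taylor polynomial (jet) of `R` at `x`. -/
def jetAt (m' : ℕ) {N : ℕ} (x : Fin N → ℝ) (R : MvPolynomial (Fin N) ℝ) :
    MvPolynomial (Fin N) ℝ :=
  ∑ α ∈ multiIdx m' N,
    MvPolynomial.C (pdEval α R x / ((∏ i, Nat.factorial (α i) : ℕ) : ℝ)) *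
      ∏ i, (MvPolynomial.X i - MvPolynomial.C (x i)) ^ α i

/-- Multiplication of `(m'-1)`-jets at `x`. -/
def odot (m' : ℕ) {N : ℕ} (x : Fin N → ℝ) (P Q : MvPolynomial (Fin N) ℝ) :
    MvPolynomial (Fin N) ℝ :=
  jetAt m' x (P * Q)

/-- The unit multiindex in the `ξ_j` direction, as a multiindex on `ℝ^{n+D}`. -/
def xiIdx (n D : ℕ) (j : Fin D) : Fin (n + D) → ℕ :=
  fun i => if i = Fin.natAdd n j then 1 else 0

/-- The shape field used for `C^m` selection: `Γ((x₀,0), M)` consists of the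
polynomials `P ∈ 𝒫⁺` (degree ≤ m on `ℝ^{n+D}`) with `P(x₀,0) = 0`,
`∇_ξ P(x₀,0) ∈ K(x₀)`, and `|∂_x^α ∂_ξ^β P(x₀,0)| ≤ M` for `|α|+|β| ≤ m`. -/
def GammaSel (m n D : ℕ) (K : (Fin n → ℝ) → Set (Fin D → ℝ))
    (x₀ : Fin n → ℝ) (M : ℝ) : Set (MvPolynomial (Fin (n + D)) ℝ) :=
  {P | P.totalDegree ≤ m ∧
    MvPolynomial.eval (Fin.append x₀ 0) P = 0 ∧
    (fun j : Fin D => pdEval (xiIdx n D j) P (Fin.append x₀ 0)) ∈ K x₀ ∧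
    ∀ γ : Fin (n + D) → ℕ, (∑ i, γ i) ≤ m → |pdEval γ P (Fin.append x₀ 0)| ≤ M}

open MvPolynomial

namespace Sel

variable {N : ℕ}

/-- `pdiff` as a linear endomorphism. -/
def pdiffLM (β : Fin N → ℕ) : Module.End ℝ (MvPolynomial (Fin N) ℝ) :=
  (List.finRange N).foldr (fun i L => ((pderiv i).toLinearMap) ^ (β i) * L) 1

theorem pdiff_eq_LM (β : Fin N → ℕ) (P : MvPolynomial (Fin N) ℝ) :
    pdiff β P = pdiffLM β P := by
  unfold pdiff pdiffLM
  induction (List.finRange N) with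
  | nil => rfl
  | cons i l ih =>
      simp only [List.foldr_cons, ih, Module.End.mul_apply, Module.End.pow_apply]
      rfl

theorem pdiff_add (β : Fin N → ℕ) (P Q : MvPolynomial (Fin N) ℝ) :
    pdiff β (P + Q) = pdiff β P + pdiff β Q := by
  simp [pdiff_eq_LM]

theorem pdiff_smul (β : Fin N → ℕ) (c : ℝ) (P : MvPolynomial (Fin N) ℝ) :
    pdiff β (c • P) = c • pdiff β P := by
  simp [pdiff_eq_LM]

theorem pdEval_add (β : Fin N → ℕ) (P Q : MvPolynomial (Fin N) ℝ) (x : Fin N → ℝ) :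
    pdEval β (P + Q) x = pdEval β P x + pdEval β Q x := by
  simp [pdEval, pdiff_add]

theorem pdEval_smul (β : Fin N → ℕ) (c : ℝ) (P : MvPolynomial (Fin N) ℝ) (x : Fin N → ℝ) :
    pdEval β (c • P) x = c * pdEval β P x := by
  simp [pdEval, pdiff_smul, smul_eval]

theorem pdiff_zero (P : MvPolynomial (Fin N) ℝ) : pdiff (fun _ => 0) P = P := by
  unfold pdiff
  induction (List.finRange N) with
  | nil => rfl
  | cons i l ih => simp [ih]

end Sel

open MvPolynomial
namespace Sel
variable {N : ℕ}

/-- Shifted monomial basis. -/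
def mono (z : Fin N → ℝ) (α : Fin N → ℕ) : MvPolynomial (Fin N) ℝ :=
  ∏ i, (X i - C (z i)) ^ α i

def mfac (α : Fin N → ℕ) : ℕ := ∏ i, Nat.factorial (α i)

theorem one_le_mfac (α : Fin N → ℕ) : 1 ≤ mfac α :=
  Nat.one_le_iff_ne_zero.2 (Finset.prod_ne_zero_iff.2 fun i _ => (Nat.factorial_pos _).ne')

theorem pderiv_lin (z : Fin N → ℝ) {i j : Fin N} (h : j ≠ i) :
    pderiv i (X j - C (z j) : MvPolynomial (Fin N) ℝ) = 0 := by
  simp [pderiv_X_of_ne h]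

theorem pderiv_lin_self (z : Fin N → ℝ) (i : Fin N) :
    pderiv i (X i - C (z i) : MvPolynomial (Fin N) ℝ) = 1 := by
  simp

theorem pderiv_pow_of_ne (z : Fin N → ℝ) {i j : Fin N} (h : j ≠ i) (a : ℕ) :
    pderiv i ((X j - C (z j) : MvPolynomial (Fin N) ℝ) ^ a) = 0 := by
  rw [pderiv_pow, pderiv_lin z h, mul_zero]

theorem pderiv_prod_erase (z : Fin N → ℝ) (α : Fin N → ℕ) (i : Fin N) :
    pderiv i (∏ j ∈ Finset.univ.erase i, (X j - C (z j) : MvPolynomial (Fin N) ℝ) ^ α j) = 0 := by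
  refine Finset.prod_induction _ (fun q => pderiv i q = 0) ?_ ?_ ?_
  · intro a b ha hb; rw [pderiv_mul, ha, hb, zero_mul, mul_zero, add_zero]
  · exact pderiv_one
  · intro j hj
    exact pderiv_pow_of_ne z (Finset.ne_of_mem_erase hj) _

/-- One-variable iterated derivative. -/
theorem iter_pderiv (z : Fin N → ℝ) (i : Fin N) (Q : MvPolynomial (Fin N) ℝ)
    (hQ : pderiv i Q = 0) (a : ℕ) :
    ∀ k : ℕ, (fun R => pderiv i R)^[k] ((X i - C (z i)) ^ a * Q)
      = (a.descFactorial k) • ((X i - C (z i)) ^ (a - k) * Q) := by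
  intro k
  induction k with
  | zero => simp
  | succ k ih =>
      rw [Function.iterate_succ_apply', ih, map_nsmul]
      rw [pderiv_mul, hQ, mul_zero, add_zero, pderiv_pow, pderiv_lin_self, mul_one]
      have h1 : a.descFactorial (k+1) = (a - k) * a.descFactorial k := Nat.descFactorial_succ a k
      have h2 : a - k - 1 = a - (k+1) := by omega
      rw [h1, h2, nsmul_eq_mul, nsmul_eq_mul]
      push_cast
      ring

end Sel

namespace Sel
variable {N : ℕ}

theorem mono_decomp (z : Fin N → ℝ) (α : Fin N → ℕ) (i : Fin N) :
    mono z α = (X i - C (z i)) ^ α i *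
      ∏ j ∈ Finset.univ.erase i, (X j - C (z j)) ^ α j :=
  (Finset.mul_prod_erase Finset.univ _ (Finset.mem_univ i)).symm

theorem foldr_mono (z : Fin N → ℝ) (γ α : Fin N → ℕ) :
    ∀ l : List (Fin N), l.Nodup →
    (l.foldr (fun i L => ((pderiv i).toLinearMap) ^ (γ i) * L) (1 : Module.End ℝ (MvPolynomial (Fin N) ℝ))) (mono z α)
      = (∏ i ∈ l.toFinset, (α i).descFactorial (γ i)) •
          mono z (fun i => if i ∈ l then α i - γ i else α i) := by
  intro l
  induction l with
  | nil => simp [mono]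
  | cons i l ih =>
      intro hnd
      have hil : i ∉ l := (List.nodup_cons.1 hnd).1
      have hnd' : l.Nodup := (List.nodup_cons.1 hnd).2
      set α' : Fin N → ℕ := fun j => if j ∈ l then α j - γ j else α j with hα'
      have step : (List.foldr (fun i L => ((pderiv i).toLinearMap) ^ (γ i) * L) (1 : Module.End ℝ (MvPolynomial (Fin N) ℝ)) l) (mono z α)
          = (∏ i ∈ l.toFinset, (α i).descFactorial (γ i)) • mono z α' := ih hnd'
      rw [List.foldr_cons, Module.End.mul_apply, step, map_nsmul, Module.End.pow_apply]
      have hiter : (fun R => pderiv i R)^[γ i] (mono z α')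
          = ((α' i).descFactorial (γ i)) •
            ((X i - C (z i)) ^ (α' i - γ i) *
              ∏ j ∈ Finset.univ.erase i, (X j - C (z j)) ^ α' j) := by
        rw [mono_decomp z α' i]
        exact iter_pderiv z i _ (pderiv_prod_erase z α' i) (α' i) (γ i)
      have hαi : α' i = α i := by simp [hα', hil]
      have hmono : (X i - C (z i)) ^ (α' i - γ i) *
              ∏ j ∈ Finset.univ.erase i, (X j - C (z j)) ^ α' j
          = mono z (fun j => if j ∈ i :: l then α j - γ j else α j) := by
        rw [mono_decomp z _ i]
        congr 1
        · simp [hαi]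
        · refine Finset.prod_congr rfl fun j hj => ?_
          have hji : j ≠ i := Finset.ne_of_mem_erase hj
          simp [hα', List.mem_cons, hji]
      have hfun : ⇑((pderiv (R := ℝ) (σ := Fin N) i).toLinearMap) = fun R => pderiv i R := rfl
      rw [hfun, hiter, hmono, hαi, smul_smul, List.toFinset_cons,
        Finset.prod_insert (by simpa using hil), mul_comm]

theorem pdiff_mono (z : Fin N → ℝ) (γ α : Fin N → ℕ) :
    pdiff γ (mono z α) = (∏ i, (α i).descFactorial (γ i)) •
      mono z (fun i => α i - γ i) := by
  rw [pdiff_eq_LM]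
  have := foldr_mono z γ α (List.finRange N) (List.nodup_finRange N)
  simpa [pdiffLM, List.mem_finRange, List.toFinset_finRange] using this

end Sel



namespace Sel
variable {N : ℕ}

theorem eval_mono_zero (z : Fin N → ℝ) {β : Fin N → ℕ} (hβ : ∀ i, β i = 0) :
    MvPolynomial.eval z (mono z β) = 1 := by
  simp [mono, hβ]

theorem eval_mono_ne (z : Fin N → ℝ) {β : Fin N → ℕ} {i : Fin N} (hβ : β i ≠ 0) :
    MvPolynomial.eval z (mono z β) = 0 := by
  rw [mono, map_prod]
  refine Finset.prod_eq_zero (Finset.mem_univ i) ?_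
  rw [map_pow, map_sub, eval_X, eval_C, sub_self, zero_pow hβ]

/-- KEY: derivatives of the shifted monomials at the center. -/
theorem pdEval_mono (z : Fin N → ℝ) (γ α : Fin N → ℕ) :
    pdEval γ (mono z α) z = if γ = α then ((mfac γ : ℕ) : ℝ) else 0 := by
  rw [pdEval, pdiff_mono, map_nsmul, nsmul_eq_mul]
  by_cases h : γ = α
  · subst h
    rw [if_pos rfl, eval_mono_zero z (fun i => Nat.sub_self (γ i)), mul_one]
    congr 1
    simp [mfac, Nat.descFactorial_self]
  · rw [if_neg h]
    have : ∃ i, γ i ≠ α i := by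
      by_contra hc
      push_neg at hc
      exact h (funext hc)
    obtain ⟨i, hi⟩ := this
    rcases Nat.lt_or_ge (α i) (γ i) with hlt | hge
    · have : (α i).descFactorial (γ i) = 0 := Nat.descFactorial_eq_zero_iff_lt.2 hlt
      rw [Finset.prod_eq_zero (Finset.mem_univ i) this]
      simp
    · have hne : α i - γ i ≠ 0 := by omega
      rw [eval_mono_ne z hne, mul_zero]

theorem mem_multiIdx {m' : ℕ} {α : Fin N → ℕ} (h : ∑ i, α i ≤ m' - 1) (hm' : 0 < m') :
    α ∈ multiIdx m' N := by
  rw [multiIdx, Finset.mem_filter]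
  refine ⟨Fintype.mem_piFinset.2 fun i => ?_, h⟩
  rw [Finset.mem_range]
  calc α i ≤ ∑ j, α j := Finset.single_le_sum (fun j _ => Nat.zero_le (α j)) (Finset.mem_univ i)
    _ ≤ m' - 1 := h
    _ < m' := by omega

theorem sum_le_of_mem_multiIdx {m' : ℕ} {α : Fin N → ℕ} (h : α ∈ multiIdx m' N) :
    ∑ i, α i ≤ m' - 1 := (Finset.mem_filter.1 h).2

theorem mfac_ne_zero (α : Fin N → ℕ) : ((mfac α : ℕ) : ℝ) ≠ 0 := by
  exact_mod_cast (Nat.one_le_iff_ne_zero.1 (one_le_mfac α))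

end Sel


namespace Sel
variable {N : ℕ}

def coefc (z : Fin N → ℝ) (α : Fin N → ℕ) (S : MvPolynomial (Fin N) ℝ) : ℝ :=
  pdEval α S z / ((mfac α : ℕ) : ℝ)

theorem jetAt_eq (m' : ℕ) (z : Fin N → ℝ) (R : MvPolynomial (Fin N) ℝ) :
    jetAt m' z R = ∑ α ∈ multiIdx m' N, coefc z α R • mono z α := by
  refine Finset.sum_congr rfl fun α _ => ?_
  rw [smul_eq_C_mul]
  rfl

theorem pdEval_sum {ι : Type*} (s : Finset ι) (f : ι → MvPolynomial (Fin N) ℝ)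
    (γ : Fin N → ℕ) (x : Fin N → ℝ) :
    pdEval γ (∑ i ∈ s, f i) x = ∑ i ∈ s, pdEval γ (f i) x := by
  unfold pdEval
  rw [pdiff_eq_LM, map_sum]
  rw [map_sum]
  refine Finset.sum_congr rfl fun i _ => ?_
  rw [pdiff_eq_LM]

/-- expansion of `aeval` into monomial products over `Fin N`. -/
theorem aeval_expand (g : Fin N → MvPolynomial (Fin N) ℝ) (T : MvPolynomial (Fin N) ℝ) :
    MvPolynomial.aeval g T
      = ∑ u ∈ T.support, T.coeff u • ∏ i, g i ^ (u i) := by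
  conv_lhs => rw [T.as_sum]
  rw [map_sum]
  refine Finset.sum_congr rfl fun u _ => ?_
  rw [MvPolynomial.aeval_monomial, MvPolynomial.algebraMap_eq, ← smul_eq_C_mul,
    Finsupp.prod_fintype _ _ (fun i => pow_zero _)]

theorem sum_coords_le_totalDegree {T : MvPolynomial (Fin N) ℝ} {u : Fin N →₀ ℕ}
    (hu : u ∈ T.support) : ∑ i, u i ≤ T.totalDegree := by
  have := MvPolynomial.le_totalDegree hu
  rwa [Finsupp.sum_fintype _ _ (fun i => rfl)] at this

theorem tdeg_prod_pow_le (g : Fin N → MvPolynomial (Fin N) ℝ)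
    (hg : ∀ i, (g i).totalDegree ≤ 1) (u : Fin N → ℕ) :
    (∏ i, g i ^ u i).totalDegree ≤ ∑ i, u i := by
  refine (MvPolynomial.totalDegree_finset_prod _ _).trans ?_
  refine Finset.sum_le_sum fun i _ => ?_
  refine (MvPolynomial.totalDegree_pow _ _).trans ?_
  calc u i * (g i).totalDegree ≤ u i * 1 := Nat.mul_le_mul_left _ (hg i)
    _ = u i := Nat.mul_one _

theorem tdeg_lin_sub (z : Fin N → ℝ) (i : Fin N) :
    (MvPolynomial.X i - MvPolynomial.C (z i) : MvPolynomial (Fin N) ℝ).totalDegree ≤ 1 := by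
  refine (MvPolynomial.totalDegree_sub _ _).trans ?_
  simp [MvPolynomial.totalDegree_X, MvPolynomial.totalDegree_C]

theorem tdeg_lin_add (z : Fin N → ℝ) (i : Fin N) :
    (MvPolynomial.X i + MvPolynomial.C (z i) : MvPolynomial (Fin N) ℝ).totalDegree ≤ 1 := by
  refine (MvPolynomial.totalDegree_add _ _).trans ?_
  simp [MvPolynomial.totalDegree_X, MvPolynomial.totalDegree_C]

theorem tdeg_mono_le (z : Fin N → ℝ) (α : Fin N → ℕ) :
    (mono z α).totalDegree ≤ ∑ i, α i :=
  tdeg_prod_pow_le _ (tdeg_lin_sub z) α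

theorem tdeg_aeval_le (g : Fin N → MvPolynomial (Fin N) ℝ)
    (hg : ∀ i, (g i).totalDegree ≤ 1) (T : MvPolynomial (Fin N) ℝ) :
    (MvPolynomial.aeval g T).totalDegree ≤ T.totalDegree := by
  rw [aeval_expand]
  refine (MvPolynomial.totalDegree_finset_sum _ _).trans (Finset.sup_le fun u hu => ?_)
  refine (MvPolynomial.totalDegree_smul_le _ _).trans ?_
  exact (tdeg_prod_pow_le g hg _).trans (sum_coords_le_totalDegree hu)

theorem span_mem (z : Fin N → ℝ) (d : ℕ) (T : MvPolynomial (Fin N) ℝ)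
    (hT : T.totalDegree ≤ d) :
    T ∈ Submodule.span ℝ ((fun α : Fin N → ℕ => mono z α) '' {α | ∑ i, α i ≤ d}) := by
  set φ : MvPolynomial (Fin N) ℝ →ₐ[ℝ] MvPolynomial (Fin N) ℝ :=
    MvPolynomial.aeval (fun i => MvPolynomial.X i + MvPolynomial.C (z i)) with hφ
  set ψ : MvPolynomial (Fin N) ℝ →ₐ[ℝ] MvPolynomial (Fin N) ℝ :=
    MvPolynomial.aeval (fun i => MvPolynomial.X i - MvPolynomial.C (z i)) with hψ
  have hcomp : ψ.comp φ = AlgHom.id ℝ _ := by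
    refine MvPolynomial.algHom_ext fun i => ?_
    simp [hφ, hψ]
  have hT' : T = ψ (φ T) := by
    have := congrArg (fun f => f T) hcomp
    simpa using this.symm
  have hdeg : (φ T).totalDegree ≤ d := (tdeg_aeval_le _ (tdeg_lin_add z) T).trans hT
  rw [hT', hψ, aeval_expand]
  refine Submodule.sum_mem _ fun u hu => Submodule.smul_mem _ _ (Submodule.subset_span ?_)
  refine ⟨fun i => u i, ?_, rfl⟩
  exact (sum_coords_le_totalDegree hu).trans hdeg

theorem jetAt_add (m' : ℕ) (z : Fin N → ℝ) (R S : MvPolynomial (Fin N) ℝ) :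
    jetAt m' z (R + S) = jetAt m' z R + jetAt m' z S := by
  rw [jetAt_eq, jetAt_eq, jetAt_eq, ← Finset.sum_add_distrib]
  refine Finset.sum_congr rfl fun α _ => ?_
  rw [← add_smul]
  congr 1
  rw [coefc, coefc, coefc, pdEval_add, add_div]

theorem jetAt_smul (m' : ℕ) (z : Fin N → ℝ) (c : ℝ) (R : MvPolynomial (Fin N) ℝ) :
    jetAt m' z (c • R) = c • jetAt m' z R := by
  rw [jetAt_eq, jetAt_eq, Finset.smul_sum]
  refine Finset.sum_congr rfl fun α _ => ?_
  rw [smul_smul]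
  congr 1
  rw [coefc, coefc, pdEval_smul, mul_div_assoc]

theorem jetAt_mono (d : ℕ) (z : Fin N → ℝ) {β : Fin N → ℕ} (hβ : ∑ i, β i ≤ d) :
    jetAt (d + 1) z (mono z β) = mono z β := by
  have hβm : β ∈ multiIdx (d + 1) N := mem_multiIdx (by simpa using hβ) (Nat.succ_pos d)
  rw [jetAt_eq]
  rw [Finset.sum_eq_single β]
  · rw [coefc, pdEval_mono, if_pos rfl, div_self (mfac_ne_zero β), one_smul]
  · intro α _ hα
    rw [coefc, pdEval_mono, if_neg hα, zero_div, zero_smul]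
  · intro h; exact absurd hβm h

/-- The jet reproduces polynomials of small degree. -/
theorem jet_fix {d : ℕ} {z : Fin N → ℝ} {T : MvPolynomial (Fin N) ℝ}
    (hT : T.totalDegree ≤ d) : jetAt (d + 1) z T = T := by
  have hmem := span_mem z d T hT
  clear hT
  induction hmem using Submodule.span_induction with
  | mem x hx =>
      obtain ⟨α, hα, rfl⟩ := hx
      exact jetAt_mono d z hα
  | zero =>
      have : (0 : MvPolynomial (Fin N) ℝ) = (0 : ℝ) • (0 : MvPolynomial (Fin N) ℝ) := by simp
      rw [this, jetAt_smul, zero_smul, zero_smul]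
  | add x y _ _ hx hy => rw [jetAt_add, hx, hy]
  | smul c x _ hx => rw [jetAt_smul, hx]

/-- Derivatives of the jet at the center match those of the function. -/
theorem pdEval_jetAt {d : ℕ} (z : Fin N → ℝ) (R : MvPolynomial (Fin N) ℝ)
    {γ : Fin N → ℕ} (hγ : ∑ i, γ i ≤ d) :
    pdEval γ (jetAt (d + 1) z R) z = pdEval γ R z := by
  have hγm : γ ∈ multiIdx (d + 1) N := mem_multiIdx (by simpa using hγ) (Nat.succ_pos d)
  rw [jetAt_eq, pdEval_sum]
  rw [Finset.sum_eq_single γ]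
  · rw [pdEval_smul, pdEval_mono, if_pos rfl, coefc, div_mul_cancel₀ _ (mfac_ne_zero γ)]
  · intro α _ hα
    rw [pdEval_smul, pdEval_mono, if_neg (fun h => hα h.symm), mul_zero]
  · intro h; exact absurd hγm h

theorem tdeg_jetAt (d : ℕ) (z : Fin N → ℝ) (R : MvPolynomial (Fin N) ℝ) :
    (jetAt (d + 1) z R).totalDegree ≤ d := by
  rw [jetAt_eq]
  refine (MvPolynomial.totalDegree_finset_sum _ _).trans (Finset.sup_le fun α hα => ?_)
  refine (MvPolynomial.totalDegree_smul_le _ _).trans ?_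
  refine (tdeg_mono_le z α).trans ?_
  simpa using sum_le_of_mem_multiIdx hα

theorem mono_mul (z : Fin N → ℝ) (α β : Fin N → ℕ) :
    mono z α * mono z β = mono z (α + β) := by
  rw [mono, mono, mono, ← Finset.prod_mul_distrib]
  refine Finset.prod_congr rfl fun i _ => ?_
  rw [← pow_add]
  rfl

/-- Leibniz / convolution formula for derivatives of a product at the center. -/
theorem conv {d : ℕ} (z : Fin N → ℝ) {A B : MvPolynomial (Fin N) ℝ}
    (hA : A.totalDegree ≤ d) (hB : B.totalDegree ≤ d) (γ : Fin N → ℕ) :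
    pdEval γ (A * B) z = ((mfac γ : ℕ) : ℝ) *
      ∑ p ∈ (multiIdx (d+1) N ×ˢ multiIdx (d+1) N).filter (fun p => p.1 + p.2 = γ),
        coefc z p.1 A * coefc z p.2 B := by
  conv_lhs => rw [← jet_fix (z := z) hA, ← jet_fix (z := z) hB, jetAt_eq, jetAt_eq]
  rw [Finset.sum_mul_sum]
  have : ∀ (α β : Fin N → ℕ),
      (coefc z α A • mono z α) * (coefc z β B • mono z β)
        = (coefc z α A * coefc z β B) • mono z (α + β) := by
    intro α β
    rw [smul_mul_assoc, mul_smul_comm, smul_smul, mono_mul]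
  rw [Finset.sum_congr rfl fun α _ => Finset.sum_congr rfl fun β _ => this α β]
  rw [pdEval_sum]
  rw [Finset.sum_congr rfl fun α _ => pdEval_sum _ _ _ _]
  have h2 : ∀ α β : Fin N → ℕ,
      pdEval γ ((coefc z α A * coefc z β B) • mono z (α + β)) z
        = if α + β = γ then (coefc z α A * coefc z β B) * ((mfac γ : ℕ) : ℝ) else 0 := by
    intro α β
    rw [pdEval_smul, pdEval_mono]
    by_cases h : γ = α + β
    · rw [if_pos h, if_pos h.symm]
    · rw [if_neg h, if_neg (fun hc => h hc.symm), mul_zero]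
  rw [Finset.sum_congr rfl fun α _ => Finset.sum_congr rfl fun β _ => h2 α β]
  rw [← Finset.sum_product']
  rw [Finset.sum_ite, Finset.sum_const_zero, add_zero, ← Finset.sum_mul]
  rw [mul_comm]

end Sel


namespace Sel
variable {N : ℕ}

open MvPolynomial

theorem eval_jetAt (d : ℕ) (z : Fin N → ℝ) (R : MvPolynomial (Fin N) ℝ) :
    MvPolynomial.eval z (jetAt (d + 1) z R) = MvPolynomial.eval z R := by
  have h := pdEval_jetAt (d := d) z R (γ := fun _ => 0) (by simp)
  rwa [pdEval, pdEval, pdiff_zero, pdiff_zero] at h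

theorem foldr_triv (e : Fin N → ℕ) :
    ∀ l : List (Fin N), (∀ i ∈ l, e i = 0) →
      (l.foldr (fun i L => ((pderiv i).toLinearMap) ^ (e i) * L)
        (1 : Module.End ℝ (MvPolynomial (Fin N) ℝ))) = 1 := by
  intro l
  induction l with
  | nil => intro _; rfl
  | cons i l ih =>
      intro h
      rw [List.foldr_cons, ih (fun j hj => h j (List.mem_cons_of_mem i hj)),
        h i List.mem_cons_self, pow_zero, one_mul]

theorem foldr_unit (i₀ : Fin N) (e : Fin N → ℕ) (he₀ : e i₀ = 1)
    (he : ∀ j, j ≠ i₀ → e j = 0) :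
    ∀ l : List (Fin N), l.Nodup → i₀ ∈ l →
      (l.foldr (fun i L => ((pderiv i).toLinearMap) ^ (e i) * L)
        (1 : Module.End ℝ (MvPolynomial (Fin N) ℝ))) = (pderiv i₀).toLinearMap := by
  intro l
  induction l with
  | nil => intro _ h; exact absurd h List.not_mem_nil
  | cons i l ih =>
      intro hnd hmem
      have hil : i ∉ l := (List.nodup_cons.1 hnd).1
      have hnd' : l.Nodup := (List.nodup_cons.1 hnd).2
      by_cases hii : i = i₀
      · subst hii
        rw [List.foldr_cons, he₀, pow_one,
          foldr_triv e l (fun j hj => he j (fun hji => hil (hji ▸ hj))), mul_one]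
      · have : i₀ ∈ l := by
          rcases List.mem_cons.1 hmem with h | h
          · exact absurd h.symm hii
          · exact h
        rw [List.foldr_cons, he i hii, pow_zero, one_mul, ih hnd' this]

theorem pdEval_unit (i₀ : Fin N) (e : Fin N → ℕ) (he₀ : e i₀ = 1)
    (he : ∀ j, j ≠ i₀ → e j = 0) (P : MvPolynomial (Fin N) ℝ) (x : Fin N → ℝ) :
    pdEval e P x = MvPolynomial.eval x (pderiv i₀ P) := by
  rw [pdEval, pdiff_eq_LM, pdiffLM,
    foldr_unit i₀ e he₀ he (List.finRange N) (List.nodup_finRange N) (List.mem_finRange i₀)]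
  rfl

theorem filter_card_le {d mm : ℕ} {γ : Fin N → ℕ} (hγ : ∑ i, γ i ≤ mm) :
    (((multiIdx (d+1) N) ×ˢ (multiIdx (d+1) N)).filter fun p => p.1 + p.2 = γ).card
      ≤ (multiIdx (mm+1) N).card := by
  refine Finset.card_le_card_of_injOn (fun p => p.1) ?_ ?_
  · intro p hp
    obtain ⟨-, hpe⟩ := Finset.mem_filter.1 hp
    refine mem_multiIdx ?_ (Nat.succ_pos mm)
    have h1 : ∀ i, p.1 i ≤ γ i := fun i => by
      have := congrFun hpe i; simp only [Pi.add_apply] at this; omega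
    calc ∑ i, p.1 i ≤ ∑ i, γ i := Finset.sum_le_sum fun i _ => h1 i
      _ ≤ mm := hγ
      _ = mm + 1 - 1 := by omega
  · intro p hp q hq h
    obtain ⟨-, hpe⟩ := Finset.mem_filter.1 hp
    obtain ⟨-, hqe⟩ := Finset.mem_filter.1 hq
    refine Prod.ext h (funext fun i => ?_)
    have h1 := congrFun hpe i
    have h2 := congrFun hqe i
    have h3 := congrFun h i
    simp only [Pi.add_apply] at h1 h2
    simp only at h3
    omega

theorem sums_of_filter {d : ℕ} {γ : Fin N → ℕ} {p : (Fin N → ℕ) × (Fin N → ℕ)}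
    (hp : p ∈ ((multiIdx (d+1) N) ×ˢ (multiIdx (d+1) N)).filter fun p => p.1 + p.2 = γ) :
    (∑ i, p.1 i) + (∑ i, p.2 i) = ∑ i, γ i := by
  obtain ⟨-, hpe⟩ := Finset.mem_filter.1 hp
  rw [← Finset.sum_add_distrib]
  exact Finset.sum_congr rfl fun i _ => congrFun hpe i

theorem zpow_le_one_of_le_one {δ : ℝ} (h0 : 0 < δ) (h1 : δ ≤ 1) {e : ℤ} (he : 0 ≤ e) :
    δ ^ e ≤ 1 := by
  obtain ⟨k, rfl⟩ := Int.eq_ofNat_of_zero_le he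
  rw [zpow_natCast]
  exact pow_le_one₀ h0.le h1

theorem abs_coefc_le (z : Fin N → ℝ) (α : Fin N → ℕ) (S : MvPolynomial (Fin N) ℝ) :
    |coefc z α S| ≤ |pdEval α S z| := by
  rw [coefc, abs_div, abs_of_pos (show (0:ℝ) < ((mfac α : ℕ):ℝ) by exact_mod_cast one_le_mfac α)]
  exact div_le_self (abs_nonneg _) (by exact_mod_cast one_le_mfac α)

/-- Bound (i): derivatives of `Q * Q` at the center. -/
theorem prod_self_bound (z : Fin N → ℝ) {mm : ℕ} {δ : ℝ} (h0 : 0 < δ)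
    (Q : MvPolynomial (Fin N) ℝ)
    (hQ : ∀ γ : Fin N → ℕ, (∑ i, γ i) ≤ mm → |pdEval γ Q z| ≤ δ ^ (-(∑ i, (γ i : ℤ))))
    {γ : Fin N → ℕ} (hγ : ∑ i, γ i ≤ mm) :
    |pdEval γ (Q * Q) z| ≤ ((mfac γ : ℕ) : ℝ) *
      (((multiIdx (mm+1) N).card : ℝ) * δ ^ (-(∑ i, (γ i : ℤ)))) := by
  rw [conv (d := Q.totalDegree) z le_rfl le_rfl γ, abs_mul,
    abs_of_nonneg (show (0:ℝ) ≤ ((mfac γ : ℕ):ℝ) by positivity)]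
  refine mul_le_mul_of_nonneg_left ?_ (by positivity)
  refine (Finset.abs_sum_le_sum_abs _ _).trans ?_
  have hterm : ∀ p ∈ ((multiIdx (Q.totalDegree+1) N) ×ˢ (multiIdx (Q.totalDegree+1) N)).filter
      (fun p => p.1 + p.2 = γ),
      |coefc z p.1 Q * coefc z p.2 Q| ≤ δ ^ (-(∑ i, (γ i : ℤ))) := by
    intro p hp
    have hsum := sums_of_filter hp
    have hsum' : (∑ i, (p.1 i : ℤ)) + (∑ i, (p.2 i : ℤ)) = ∑ i, (γ i : ℤ) := by
      have := congrArg (Nat.cast (R := ℤ)) hsum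
      push_cast at this
      exact this
    have h1 : ∑ i, p.1 i ≤ mm := by omega
    have h2 : ∑ i, p.2 i ≤ mm := by omega
    rw [abs_mul]
    have b1 : |coefc z p.1 Q| ≤ δ ^ (-(∑ i, (p.1 i : ℤ))) :=
      (abs_coefc_le z _ Q).trans (hQ _ h1)
    have b2 : |coefc z p.2 Q| ≤ δ ^ (-(∑ i, (p.2 i : ℤ))) :=
      (abs_coefc_le z _ Q).trans (hQ _ h2)
    calc |coefc z p.1 Q| * |coefc z p.2 Q|
        ≤ δ ^ (-(∑ i, (p.1 i : ℤ))) * δ ^ (-(∑ i, (p.2 i : ℤ))) :=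
          mul_le_mul b1 b2 (abs_nonneg _) (zpow_pos h0 _).le
      _ = δ ^ (-(∑ i, (γ i : ℤ))) := by
          rw [← zpow_add₀ (ne_of_gt h0)]
          congr 1
          omega
  refine (Finset.sum_le_sum hterm).trans ?_
  rw [Finset.sum_const, nsmul_eq_mul]
  refine mul_le_mul_of_nonneg_right ?_ (zpow_pos h0 _).le
  exact_mod_cast filter_card_le hγ

theorem mfac_le_pow {mm : ℕ} {γ : Fin N → ℕ} (hγ : ∑ i, γ i ≤ mm) :
    ((mfac γ : ℕ) : ℝ) ≤ ((mm.factorial : ℝ)) ^ N := by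
  have h : mfac γ ≤ mm.factorial ^ N := by
    rw [mfac]
    calc ∏ i, (γ i).factorial ≤ ∏ _i : Fin N, mm.factorial := by
          refine Finset.prod_le_prod' fun i _ => Nat.factorial_le ?_
          calc γ i ≤ ∑ j, γ j :=
            Finset.single_le_sum (fun j _ => Nat.zero_le (γ j)) (Finset.mem_univ i)
            _ ≤ mm := hγ
      _ = mm.factorial ^ N := by rw [Finset.prod_const, Finset.card_univ, Fintype.card_fin]
  exact_mod_cast h

/-- Bound (ii): the main product estimate. -/
theorem main_bound (z : Fin N → ℝ) {mm : ℕ} {δ M : ℝ} (h0 : 0 < δ) (h1 : δ ≤ 1)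
    (hM : 0 < M) {A B : MvPolynomial (Fin N) ℝ}
    (hA : A.totalDegree ≤ mm) (hB : B.totalDegree ≤ mm)
    (hcA : ∀ α : Fin N → ℕ, (∑ i, α i) ≤ mm → |pdEval α A z| ≤ ((mfac α : ℕ) : ℝ) *
      (((multiIdx (mm+1) N).card : ℝ) * δ ^ (-(∑ i, (α i : ℤ)))))
    (hcB : ∀ β : Fin N → ℕ, (∑ i, β i) ≤ mm → |pdEval β B z| ≤ M * δ ^ (mm + 1 - ∑ i, β i))
    {γ : Fin N → ℕ} (hγ : ∑ i, γ i ≤ mm) :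
    |pdEval γ (A * B) z| ≤
      (((mm.factorial : ℝ)) ^ N) ^ 2 * (((multiIdx (mm+1) N).card : ℝ)) ^ 2 * M := by
  have hs1 : (1 : ℝ) ≤ ((multiIdx (mm+1) N).card : ℝ) := by
    have : (fun _ : Fin N => 0) ∈ multiIdx (mm+1) N := mem_multiIdx (by simp) (Nat.succ_pos mm)
    exact_mod_cast Finset.card_pos.2 ⟨_, this⟩
  set s : ℝ := ((multiIdx (mm+1) N).card : ℝ) with hs
  set F : ℝ := ((mm.factorial : ℝ)) ^ N with hF
  have hF1 : (1:ℝ) ≤ F := one_le_pow₀ (by exact_mod_cast mm.factorial_pos)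
  rw [conv (d := mm) z hA hB γ, abs_mul,
    abs_of_nonneg (show (0:ℝ) ≤ ((mfac γ : ℕ):ℝ) by positivity)]
  have hterm : ∀ p ∈ ((multiIdx (mm+1) N) ×ˢ (multiIdx (mm+1) N)).filter
      (fun p => p.1 + p.2 = γ),
      |coefc z p.1 A * coefc z p.2 B| ≤ F * s * M := by
    intro p hp
    have hsum := sums_of_filter hp
    have hsum' : (∑ i, (p.1 i : ℤ)) + (∑ i, (p.2 i : ℤ)) = ∑ i, (γ i : ℤ) := by
      have := congrArg (Nat.cast (R := ℤ)) hsum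
      push_cast at this
      exact this
    have hp1 : ∑ i, p.1 i ≤ mm := by omega
    have hp2 : ∑ i, p.2 i ≤ mm := by omega
    rw [abs_mul]
    have b1 : |coefc z p.1 A| ≤ F * (s * δ ^ (-(∑ i, (p.1 i : ℤ)))) := by
      refine ((abs_coefc_le z _ A).trans (hcA _ hp1)).trans ?_
      refine mul_le_mul_of_nonneg_right (mfac_le_pow hp1) ?_
      positivity
    have b2 : |coefc z p.2 B| ≤ M * δ ^ (mm + 1 - ∑ i, p.2 i) :=
      (abs_coefc_le z _ B).trans (hcB _ hp2)
    calc |coefc z p.1 A| * |coefc z p.2 B|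
        ≤ (F * (s * δ ^ (-(∑ i, (p.1 i : ℤ))))) * (M * δ ^ (mm + 1 - ∑ i, p.2 i)) := by
          refine mul_le_mul b1 b2 (abs_nonneg _) ?_
          positivity
      _ = F * s * M * (δ ^ (-(∑ i, (p.1 i : ℤ))) * δ ^ (mm + 1 - ∑ i, p.2 i)) := by ring
      _ ≤ F * s * M * 1 := by
          refine mul_le_mul_of_nonneg_left ?_ (by positivity)
          rw [← zpow_natCast δ (mm + 1 - ∑ i, p.2 i), ← zpow_add₀ (ne_of_gt h0)]
          refine zpow_le_one_of_le_one h0 h1 ?_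
          rw [Nat.cast_sub (by omega : ∑ i, p.2 i ≤ mm + 1)]
          have hγz : (∑ i, (γ i : ℤ)) ≤ (mm : ℤ) := by
            rw [← Nat.cast_sum]; exact_mod_cast hγ
          have hp1' : (∑ i, (p.1 i : ℤ)) = ((∑ i, p.1 i : ℕ) : ℤ) := by push_cast; rfl
          have hp2' : (∑ i, (p.2 i : ℤ)) = ((∑ i, p.2 i : ℕ) : ℤ) := by push_cast; rfl
          push_cast
          omega
      _ = F * s * M := mul_one _
  calc ((mfac γ : ℕ) : ℝ) * |∑ p ∈ ((multiIdx (mm+1) N) ×ˢ (multiIdx (mm+1) N)).filter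
        (fun p => p.1 + p.2 = γ), coefc z p.1 A * coefc z p.2 B|
      ≤ F * |∑ p ∈ ((multiIdx (mm+1) N) ×ˢ (multiIdx (mm+1) N)).filter
        (fun p => p.1 + p.2 = γ), coefc z p.1 A * coefc z p.2 B| :=
        mul_le_mul_of_nonneg_right (mfac_le_pow hγ) (abs_nonneg _)
    _ ≤ F * ∑ p ∈ ((multiIdx (mm+1) N) ×ˢ (multiIdx (mm+1) N)).filter
        (fun p => p.1 + p.2 = γ), |coefc z p.1 A * coefc z p.2 B| :=
        mul_le_mul_of_nonneg_left (Finset.abs_sum_le_sum_abs _ _) (by positivity)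
    _ ≤ F * (s * (F * s * M)) := by
        refine mul_le_mul_of_nonneg_left ?_ (by positivity)
        refine (Finset.sum_le_sum hterm).trans ?_
        rw [Finset.sum_const, nsmul_eq_mul]
        refine mul_le_mul_of_nonneg_right ?_ (by positivity)
        rw [hs]
        exact_mod_cast filter_card_le (d := mm) hγ
    _ = F ^ 2 * s ^ 2 * M := by ring

end Sel

/-- Lemma 13.1: `Γ⃗ = (Γ((x₀,0), M))` is a `(C, 1)`-convex shape field on
`E⁺ = E × {0}` (with parameters `m+1`, `n+D`), for a constant `C` depending only
on `m`, `n`, `D`.  In particular, with `z = (x₀, 0)`, if `P₁, P₂ ∈ Γ(z, M)`,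
`|∂^γ(P₁-P₂)(z)| ≤ M δ^{(m+1)-|γ|}`, `|∂^γ Q_i(z)| ≤ δ^{-|γ|}` for `|γ| ≤ m`
with `0 < δ ≤ 1`, and `Q₁⊙Q₁ + Q₂⊙Q₂ = 1`, then
`P = Q₁⊙Q₁⊙P₁ + Q₂⊙Q₂⊙P₂` satisfies `P(z) = 0`,
`∇_ξ P(z) = Q₁(z)² ∇_ξ P₁(z) + Q₂(z)² ∇_ξ P₂(z) ∈ K(x₀)`, and `P ∈ Γ(z, CM)`. -/
theorem selection_shape_field (m n D : ℕ) (hm : 0 < m) (hn : 0 < n) (hD : 0 < D) :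
    ∃ C : ℝ, 0 < C ∧
      ∀ (E : Set (Fin n → ℝ)), E.Finite →
      ∀ K : (Fin n → ℝ) → Set (Fin D → ℝ), (∀ x ∈ E, Convex ℝ (K x)) →
        -- shape field properties
        (∀ x₀ ∈ E, ∀ M : ℝ, 0 < M → Convex ℝ (GammaSel m n D K x₀ M) ∧
          ∀ M' : ℝ, 0 < M' → M' ≤ M → GammaSel m n D K x₀ M' ⊆ GammaSel m n D K x₀ M) ∧
        -- (C, 1)-convexity, together with the explicit formula for ∇_ξ P
        (∀ δ : ℝ, 0 < δ → δ ≤ 1 → ∀ x₀ ∈ E, ∀ M : ℝ, 0 < M →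
          ∀ P₁ P₂ Q₁ Q₂ : MvPolynomial (Fin (n + D)) ℝ,
            P₁ ∈ GammaSel m n D K x₀ M → P₂ ∈ GammaSel m n D K x₀ M →
            (∀ γ : Fin (n + D) → ℕ, (∑ i, γ i) ≤ m →
              |pdEval γ (P₁ - P₂) (Fin.append x₀ 0)| ≤ M * δ ^ (m + 1 - ∑ i, γ i)) →
            (∀ γ : Fin (n + D) → ℕ, (∑ i, γ i) ≤ m →
              |pdEval γ Q₁ (Fin.append x₀ 0)| ≤ δ ^ (-(∑ i, (γ i : ℤ))) ∧
              |pdEval γ Q₂ (Fin.append x₀ 0)| ≤ δ ^ (-(∑ i, (γ i : ℤ)))) →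
            odot (m + 1) (Fin.append x₀ 0) Q₁ Q₁ +
              odot (m + 1) (Fin.append x₀ 0) Q₂ Q₂ = 1 →
            MvPolynomial.eval (Fin.append x₀ 0)
              (odot (m + 1) (Fin.append x₀ 0) (odot (m + 1) (Fin.append x₀ 0) Q₁ Q₁) P₁ +
               odot (m + 1) (Fin.append x₀ 0) (odot (m + 1) (Fin.append x₀ 0) Q₂ Q₂) P₂) = 0 ∧
            (∀ j : Fin D,
              pdEval (xiIdx n D j)
                (odot (m + 1) (Fin.append x₀ 0) (odot (m + 1) (Fin.append x₀ 0) Q₁ Q₁) P₁ +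
                 odot (m + 1) (Fin.append x₀ 0) (odot (m + 1) (Fin.append x₀ 0) Q₂ Q₂) P₂)
                (Fin.append x₀ 0) =
              (MvPolynomial.eval (Fin.append x₀ 0) Q₁) ^ 2 *
                pdEval (xiIdx n D j) P₁ (Fin.append x₀ 0) +
              (MvPolynomial.eval (Fin.append x₀ 0) Q₂) ^ 2 *
                pdEval (xiIdx n D j) P₂ (Fin.append x₀ 0)) ∧
            (fun j : Fin D =>
              pdEval (xiIdx n D j)
                (odot (m + 1) (Fin.append x₀ 0) (odot (m + 1) (Fin.append x₀ 0) Q₁ Q₁) P₁ +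
                 odot (m + 1) (Fin.append x₀ 0) (odot (m + 1) (Fin.append x₀ 0) Q₂ Q₂) P₂)
                (Fin.append x₀ 0)) ∈ K x₀ ∧
            (odot (m + 1) (Fin.append x₀ 0) (odot (m + 1) (Fin.append x₀ 0) Q₁ Q₁) P₁ +
             odot (m + 1) (Fin.append x₀ 0) (odot (m + 1) (Fin.append x₀ 0) Q₂ Q₂) P₂) ∈
              GammaSel m n D K x₀ (C * M)) := by
  classical
  open Sel in
  refine ⟨((m.factorial : ℝ) ^ (n + D)) ^ 2 * (((multiIdx (m+1) (n+D)).card : ℝ)) ^ 2 + 1,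
    by positivity, ?_⟩
  intro E hE K hK
  constructor
  · -- shape field properties
    intro x₀ hx₀ M hM
    constructor
    · -- convexity of `GammaSel`
      intro P hP Q hQ a b ha hb hab
      obtain ⟨hPd, hPe, hPg, hPb⟩ := hP
      obtain ⟨hQd, hQe, hQg, hQb⟩ := hQ
      refine ⟨?_, ?_, ?_, ?_⟩
      · refine (MvPolynomial.totalDegree_add _ _).trans (max_le ?_ ?_)
        · exact (MvPolynomial.totalDegree_smul_le _ _).trans hPd
        · exact (MvPolynomial.totalDegree_smul_le _ _).trans hQd
      · rw [map_add, MvPolynomial.smul_eval, MvPolynomial.smul_eval, hPe, hQe,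
          mul_zero, mul_zero, add_zero]
      · have heq : (fun j : Fin D => pdEval (xiIdx n D j) (a • P + b • Q) (Fin.append x₀ 0))
            = a • (fun j : Fin D => pdEval (xiIdx n D j) P (Fin.append x₀ 0))
              + b • (fun j : Fin D => pdEval (xiIdx n D j) Q (Fin.append x₀ 0)) := by
          funext j
          simp only [Pi.add_apply, Pi.smul_apply, smul_eq_mul]
          rw [pdEval_add, pdEval_smul, pdEval_smul]
        rw [heq]
        exact hK x₀ hx₀ hPg hQg ha hb hab
      · intro γ hγ
        rw [pdEval_add, pdEval_smul, pdEval_smul]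
        calc |a * pdEval γ P (Fin.append x₀ 0) + b * pdEval γ Q (Fin.append x₀ 0)|
            ≤ |a * pdEval γ P (Fin.append x₀ 0)| + |b * pdEval γ Q (Fin.append x₀ 0)| :=
              abs_add_le _ _
          _ = a * |pdEval γ P (Fin.append x₀ 0)| + b * |pdEval γ Q (Fin.append x₀ 0)| := by
              rw [abs_mul, abs_mul, abs_of_nonneg ha, abs_of_nonneg hb]
          _ ≤ a * M + b * M := by
              refine add_le_add ?_ ?_
              · exact mul_le_mul_of_nonneg_left (hPb γ hγ) ha
              · exact mul_le_mul_of_nonneg_left (hQb γ hγ) hb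
          _ = M := by rw [← add_mul, hab, one_mul]
    · -- monotonicity
      intro M' _ hle P hP
      exact ⟨hP.1, hP.2.1, hP.2.2.1, fun γ hγ => (hP.2.2.2 γ hγ).trans hle⟩
  · -- (C,1)-convexity
    intro δ hδ0 hδ1 x₀ hx₀ M hM P₁ P₂ Q₁ Q₂ hP₁ hP₂ hdiff hQ hpart
    set z : Fin (n + D) → ℝ := Fin.append x₀ 0 with hz
    obtain ⟨hP₁d, hP₁e, hP₁g, hP₁b⟩ := hP₁
    obtain ⟨hP₂d, hP₂e, hP₂g, hP₂b⟩ := hP₂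
    set A₁ : MvPolynomial (Fin (n + D)) ℝ := odot (m+1) z Q₁ Q₁ with hA₁
    set A₂ : MvPolynomial (Fin (n + D)) ℝ := odot (m+1) z Q₂ Q₂ with hA₂
    have hA₁jet : A₁ = jetAt (m+1) z (Q₁ * Q₁) := rfl
    have hA₂jet : A₂ = jetAt (m+1) z (Q₂ * Q₂) := rfl
    have hA₁deg : A₁.totalDegree ≤ m := by rw [hA₁jet]; exact tdeg_jetAt m z _
    have hA₂deg : A₂.totalDegree ≤ m := by rw [hA₂jet]; exact tdeg_jetAt m z _
    have hevalA₁ : MvPolynomial.eval z A₁ = (MvPolynomial.eval z Q₁) ^ 2 := by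
      rw [hA₁jet, eval_jetAt, map_mul, sq]
    have hevalA₂ : MvPolynomial.eval z A₂ = (MvPolynomial.eval z Q₂) ^ 2 := by
      rw [hA₂jet, eval_jetAt, map_mul, sq]
    -- conclusion 1 : evaluation vanishes
    have hcone : MvPolynomial.eval z (odot (m+1) z A₁ P₁ + odot (m+1) z A₂ P₂) = 0 := by
      rw [map_add]
      have e1 : MvPolynomial.eval z (odot (m+1) z A₁ P₁) = 0 := by
        show MvPolynomial.eval z (jetAt (m+1) z (A₁ * P₁)) = 0
        rw [eval_jetAt, map_mul, hP₁e, mul_zero]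
      have e2 : MvPolynomial.eval z (odot (m+1) z A₂ P₂) = 0 := by
        show MvPolynomial.eval z (jetAt (m+1) z (A₂ * P₂)) = 0
        rw [eval_jetAt, map_mul, hP₂e, mul_zero]
      rw [e1, e2, add_zero]
    -- conclusion 2 : gradient formula
    have hxi1 : ∀ j : Fin D, xiIdx n D j (Fin.natAdd n j) = 1 := by
      intro j; simp [xiIdx]
    have hxi0 : ∀ j : Fin D, ∀ k, k ≠ Fin.natAdd n j → xiIdx n D j k = 0 := by
      intro j k hk; simp [xiIdx, hk]
    have hxisum : ∀ j : Fin D, ∑ i, xiIdx n D j i = 1 := by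
      intro j
      rw [show (fun i => xiIdx n D j i) = fun i => if i = Fin.natAdd n j then 1 else 0 from rfl]
      rw [Finset.sum_ite_eq' Finset.univ (Fin.natAdd n j) (fun _ => 1)]
      simp
    have hgradP : ∀ (R : MvPolynomial (Fin (n+D)) ℝ) (j : Fin D),
        pdEval (xiIdx n D j) R z = MvPolynomial.eval z (pderiv (Fin.natAdd n j) R) :=
      fun R j => pdEval_unit _ _ (hxi1 j) (hxi0 j) R z
    have hgrad : ∀ j : Fin D,
        pdEval (xiIdx n D j) (odot (m+1) z A₁ P₁ + odot (m+1) z A₂ P₂) z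
          = (MvPolynomial.eval z Q₁) ^ 2 * pdEval (xiIdx n D j) P₁ z
            + (MvPolynomial.eval z Q₂) ^ 2 * pdEval (xiIdx n D j) P₂ z := by
      intro j
      rw [pdEval_add]
      have j1 : pdEval (xiIdx n D j) (odot (m+1) z A₁ P₁) z
          = (MvPolynomial.eval z Q₁) ^ 2 * pdEval (xiIdx n D j) P₁ z := by
        show pdEval (xiIdx n D j) (jetAt (m+1) z (A₁ * P₁)) z = _
        rw [pdEval_jetAt z _ (by rw [hxisum j]; omega)]
        rw [hgradP (A₁ * P₁) j, MvPolynomial.pderiv_mul, map_add, map_mul, map_mul,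
          hP₁e, mul_zero, zero_add, hevalA₁, hgradP P₁ j]
      have j2 : pdEval (xiIdx n D j) (odot (m+1) z A₂ P₂) z
          = (MvPolynomial.eval z Q₂) ^ 2 * pdEval (xiIdx n D j) P₂ z := by
        show pdEval (xiIdx n D j) (jetAt (m+1) z (A₂ * P₂)) z = _
        rw [pdEval_jetAt z _ (by rw [hxisum j]; omega)]
        rw [hgradP (A₂ * P₂) j, MvPolynomial.pderiv_mul, map_add, map_mul, map_mul,
          hP₂e, mul_zero, zero_add, hevalA₂, hgradP P₂ j]
      rw [j1, j2]
    -- conclusion 3 : gradient lies in K x₀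
    have hθ : (MvPolynomial.eval z Q₁) ^ 2 + (MvPolynomial.eval z Q₂) ^ 2 = 1 := by
      have := congrArg (MvPolynomial.eval z) hpart
      rw [map_add, map_one, hevalA₁, hevalA₂] at this
      exact this
    have hconK : (fun j : Fin D =>
        pdEval (xiIdx n D j) (odot (m+1) z A₁ P₁ + odot (m+1) z A₂ P₂) z) ∈ K x₀ := by
      have heqf : (fun j : Fin D =>
          pdEval (xiIdx n D j) (odot (m+1) z A₁ P₁ + odot (m+1) z A₂ P₂) z)
          = (MvPolynomial.eval z Q₁) ^ 2 • (fun j : Fin D => pdEval (xiIdx n D j) P₁ z)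
            + (MvPolynomial.eval z Q₂) ^ 2 • (fun j : Fin D => pdEval (xiIdx n D j) P₂ z) := by
        funext j
        simp only [Pi.add_apply, Pi.smul_apply, smul_eq_mul]
        exact hgrad j
      rw [heqf]
      exact hK x₀ hx₀ hP₁g hP₂g (sq_nonneg _) (sq_nonneg _) hθ
    -- conclusion 4 : membership in `GammaSel` with constant `C * M`
    refine ⟨hcone, hgrad, hconK, ?_, hcone, hconK, ?_⟩
    · refine (MvPolynomial.totalDegree_add _ _).trans (max_le ?_ ?_)
      · exact tdeg_jetAt m z _
      · exact tdeg_jetAt m z _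
    · intro γ hγ
      have heq : pdEval γ (odot (m+1) z A₁ P₁ + odot (m+1) z A₂ P₂) z
          = pdEval γ (A₁ * (P₁ - P₂)) z + pdEval γ P₂ z := by
        rw [pdEval_add]
        have e1 : pdEval γ (odot (m+1) z A₁ P₁) z = pdEval γ (A₁ * P₁) z := by
          show pdEval γ (jetAt (m+1) z (A₁ * P₁)) z = _
          exact pdEval_jetAt z _ hγ
        have e2 : pdEval γ (odot (m+1) z A₂ P₂) z = pdEval γ (A₂ * P₂) z := by
          show pdEval γ (jetAt (m+1) z (A₂ * P₂)) z = _
          exact pdEval_jetAt z _ hγ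
        rw [e1, e2, ← pdEval_add]
        have hring : A₁ * P₁ + A₂ * P₂ = A₁ * (P₁ - P₂) + P₂ := by
          linear_combination (P₂ : MvPolynomial (Fin (n+D)) ℝ) * hpart
        rw [hring, pdEval_add]
      rw [heq]
      have hBdeg : (P₁ - P₂).totalDegree ≤ m :=
        (MvPolynomial.totalDegree_sub _ _).trans (max_le hP₁d hP₂d)
      have hcA : ∀ α : Fin (n+D) → ℕ, (∑ i, α i) ≤ m → |pdEval α A₁ z| ≤ ((mfac α : ℕ) : ℝ) *
          (((multiIdx (m+1) (n+D)).card : ℝ) * δ ^ (-(∑ i, (α i : ℤ)))) := by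
        intro α hα
        have : pdEval α A₁ z = pdEval α (Q₁ * Q₁) z := by
          rw [hA₁jet]; exact pdEval_jetAt z _ hα
        rw [this]
        exact prod_self_bound z hδ0 Q₁ (fun γ' hγ' => (hQ γ' hγ').1) hα
      have hb1 : |pdEval γ (A₁ * (P₁ - P₂)) z| ≤
          ((m.factorial : ℝ) ^ (n+D)) ^ 2 * (((multiIdx (m+1) (n+D)).card : ℝ)) ^ 2 * M :=
        main_bound z hδ0 hδ1 hM hA₁deg hBdeg hcA (fun β hβ => hdiff β hβ) hγ
      have hb2 : |pdEval γ P₂ z| ≤ M := hP₂b γ hγ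
      calc |pdEval γ (A₁ * (P₁ - P₂)) z + pdEval γ P₂ z|
          ≤ |pdEval γ (A₁ * (P₁ - P₂)) z| + |pdEval γ P₂ z| := abs_add_le _ _
        _ ≤ ((m.factorial : ℝ) ^ (n+D)) ^ 2 * (((multiIdx (m+1) (n+D)).card : ℝ)) ^ 2 * M
            + M := add_le_add hb1 hb2
        _ = (((m.factorial : ℝ) ^ (n + D)) ^ 2 * (((multiIdx (m+1) (n+D)).card : ℝ)) ^ 2 + 1)
            * M := by ring


end
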